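/- Let Z be a finite set of points in a pseudometric space partitioned into m color classes Z_1, ..., Z_m, such that within each color class all pairwise distances are at least m·d₂. Form the graph G_Z on vertex set Z with an edge between z₁ and z₂ whenever d(z₁,z₂) < d₂. Then any two points x, y in the same connected component of G_Z satisfy d(x,y) < (m−1)·d₂, and no connected component contains two points of the same color. -/

import Mathlib

open SimpleGraph

private lemma aux_getVert_drop {V : Type*} {G : SimpleGraph V} :
    ∀ {u v : V} (w : G.Walk u v) (i n : ℕ), (w.drop i).getVert n = w.getVert (i + n)
  | u, _, .nil, i, n => by
    cases i <;> simp [Walk.drop, Walk.getVert_of_length_le]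
  | u, v, .cons h q, 0, n => by
    simp [Walk.drop]
  | u, v, .cons h q, (i + 1), n => by
    exact Walk.drop_getVert _ _ _

private lemma aux_support_getElem {V : Type*} {G : SimpleGraph V} :
    ∀ {u v : V} (w : G.Walk u v) (i : ℕ), i ≤ w.length → w.support[i]? = some (w.getVert i)
  | u, _, .nil, i, hi => by
    have : i = 0 := by simpa using hi
    subst this
    simp
  | u, v, .cons h q, 0, _ => by simp
  | u, v, .cons h q, (i + 1), hi => by
    have := aux_support_getElem q i (by simpa using hi)
    simpa using this

private lemma aux_dist_getVert {V U : Type*} [PseudoMetricSpace U] {G : SimpleGraph V}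
    (φ : V → U) {d₂ : ℝ} (hd₂ : 0 < d₂)
    (hadj : ∀ a b : V, G.Adj a b → dist (φ a) (φ b) < d₂) :
    ∀ {u v : V} (w : G.Walk u v) (j : ℕ),
      u = w.getVert j ∨ dist (φ u) (φ (w.getVert j)) < (j : ℝ) * d₂
  | u, _, .nil, j => Or.inl (by simp [Walk.getVert_of_length_le])
  | u, v, .cons h q, 0 => Or.inl (by simp)
  | u, v, .cons h q, (j + 1) => by
    right
    have h1 : dist (φ u) (φ _) < d₂ := hadj _ _ h
    rcases aux_dist_getVert φ hd₂ hadj q j with h2 | h2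
    · rw [Walk.getVert_cons_succ, ← h2]
      calc dist (φ u) (φ _) < d₂ := h1
        _ ≤ (↑(j + 1) : ℝ) * d₂ := by
            have h3 : (1 : ℝ) ≤ ((j + 1 : ℕ) : ℝ) := by exact_mod_cast Nat.succ_le_succ (Nat.zero_le j)
            nlinarith
    · rw [Walk.getVert_cons_succ]
      calc dist (φ u) (φ (q.getVert j)) ≤ dist (φ u) (φ _) + dist (φ _) (φ (q.getVert j)) :=
            dist_triangle _ _ _
        _ < d₂ + (j : ℝ) * d₂ := by linarith
        _ = (↑(j + 1) : ℝ) * d₂ := by push_cast; ring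

/-- Lemma 1 (disjoint groups): if within each of the `m` color classes all pairwise distances
are at least `m·d₂`, then in the graph joining points at distance `< d₂`, any two distinct
points in the same connected component are at distance `< (m-1)·d₂` and have different colors. -/
theorem component_width_disjoint {U : Type*} [PseudoMetricSpace U]
    (m : ℕ) (hm : 1 ≤ m) (d₂ : ℝ) (hd₂ : 0 < d₂)
    (Z : Finset U) (color : U → Fin m)
    (hsep : ∀ x ∈ Z, ∀ y ∈ Z, x ≠ y → color x = color y → (m : ℝ) * d₂ ≤ dist x y)
    (G : SimpleGraph {z // z ∈ Z})
    (hG : ∀ a b : {z // z ∈ Z}, G.Adj a b ↔ (a ≠ b ∧ dist (a : U) (b : U) < d₂)) :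
    ∀ a b : {z // z ∈ Z}, a ≠ b → G.Reachable a b →
      dist (a : U) (b : U) < ((m : ℝ) - 1) * d₂ ∧ color (a : U) ≠ color (b : U) := by
  have hadj : ∀ a b : {z // z ∈ Z}, G.Adj a b → dist (a : U) (b : U) < d₂ := by
    intro a b h
    exact ((hG a b).1 h).2
  intro a b hab hreach
  classical
  obtain ⟨w⟩ := hreach
  set p : G.Walk a b := w.toPath.1 with hp
  have hpath : p.IsPath := w.toPath.2
  have hnodup : p.support.Nodup := hpath.2
  have hslen : p.support.length = p.length + 1 := p.length_support
  -- getVert injectivity on the path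
  have hinj : ∀ i j : ℕ, i ≤ p.length → j ≤ p.length → p.getVert i = p.getVert j → i = j := by
    intro i j hi hj hij
    have h1 := aux_support_getElem p i hi
    have h2 := aux_support_getElem p j hj
    refine (List.getElem?_inj (l := p.support) ?_ hnodup).1 ?_
    · omega
    · rw [h1, h2, hij]
  -- distance between getVert i and getVert j
  have hdistv : ∀ i j : ℕ, i ≤ j →
      p.getVert i = p.getVert j ∨
        dist ((p.getVert i : U)) ((p.getVert j : U)) < ((j - i : ℕ) : ℝ) * d₂ := by
    intro i j hij
    have := aux_dist_getVert (fun z : {z // z ∈ Z} => (z : U)) hd₂ hadj (p.drop i) (j - i)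
    rw [aux_getVert_drop] at this
    rw [Nat.add_sub_cancel' hij] at this
    exact this
  -- the length of p is at most m - 1
  have hlen : p.length ≤ m - 1 := by
    by_contra hlen
    push_neg at hlen
    have hmlen : m ≤ p.length := by omega
    -- pigeonhole on the first m+1 vertices
    have hcard : (Finset.univ : Finset (Fin m)).card < (Finset.range (m + 1)).card := by
      simp
    have key : ∀ i j : ℕ, i < j → j < m + 1 →
        color ((p.getVert i : U)) = color ((p.getVert j : U)) → False := by
      intro i j hlt hj hcol
      have hiL : i ≤ p.length := by omega
      have hjL : j ≤ p.length := by omega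
      have hne : p.getVert i ≠ p.getVert j := fun h => Nat.ne_of_lt hlt (hinj i j hiL hjL h)
      have hneU : ((p.getVert i : U)) ≠ ((p.getVert j : U)) := fun h => hne (Subtype.ext h)
      have hsep' := hsep _ (p.getVert i).2 _ (p.getVert j).2 hneU hcol
      rcases hdistv i j (le_of_lt hlt) with h | h
      · exact hne h
      · have hji : ((j - i : ℕ) : ℝ) ≤ (m : ℝ) := by
          have : j - i ≤ m := by omega
          exact_mod_cast this
        nlinarith
    obtain ⟨i, hi, j, hj, hij, hcol⟩ :=
      Finset.exists_ne_map_eq_of_card_lt_of_maps_to hcard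
        (f := fun i => color ((p.getVert i : U)))
        (fun i _ => Finset.mem_univ _)
    simp only [Finset.mem_range] at hi hj
    rcases Nat.lt_or_ge i j with hlt | hge
    · exact key i j hlt hj hcol
    · exact key j i (by omega) hi hcol.symm
  -- now conclude
  have hlenpos : 1 ≤ p.length := by
    rcases Nat.eq_zero_or_pos p.length with h | h
    · exfalso
      exact hab (p.eq_of_length_eq_zero h)
    · exact h
  have hd : dist (a : U) (b : U) < ((m : ℝ) - 1) * d₂ := by
    have := hdistv 0 p.length (Nat.zero_le _)
    rw [p.getVert_zero, p.getVert_length] at this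
    rcases this with h | h
    · exact absurd h hab
    · calc dist (a : U) (b : U) < ((p.length - 0 : ℕ) : ℝ) * d₂ := h
        _ ≤ ((m : ℝ) - 1) * d₂ := by
            have h1 : ((p.length - 0 : ℕ) : ℝ) ≤ (m : ℝ) - 1 := by
              have : p.length - 0 ≤ m - 1 := by omega
              have h2 : ((p.length - 0 : ℕ) : ℝ) ≤ ((m - 1 : ℕ) : ℝ) := by exact_mod_cast this
              have h3 : ((m - 1 : ℕ) : ℝ) = (m : ℝ) - 1 := by
                have : (1 : ℕ) ≤ m := hm
                push_cast [this]
                ring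
              linarith
            nlinarith
  refine ⟨hd, ?_⟩
  intro hcol
  have habU : (a : U) ≠ (b : U) := fun h => hab (Subtype.ext h)
  have := hsep _ a.2 _ b.2 habU hcol
  have hmd : ((m : ℝ) - 1) * d₂ < (m : ℝ) * d₂ := by nlinarith
  linarith
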